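/- Let n, N, m be positive integers with n + 1 ≤ N, and let Δ = (Δ_1, …, Δ_m) ∈ ℝ^m. Suppose that for every positive integer k there exists an index i ∈ {1, …, m} such that the fractional part Int.fract(k·Δ_i/(2N)) lies in the interval [0, n/N] (equivalently, k·Δ_i mod 2Nℤ lies in [0, 2n]). Then there exists a nonzero integer vector a = (a_1, …, a_m) ∈ ℤ^m such that a_1·Δ_1 + … + a_m·Δ_m ∈ 2N·ℤ. -/

import Mathlib

open Finset

lemma expand_cos (R : ℕ) (t : ℝ) :
    ((4 * Real.cos (Real.pi * t)^2 : ℝ) : ℂ)^R =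
      ∑ j ∈ Finset.range (2*R+1),
        (Nat.choose (2*R) j : ℂ) * Complex.exp (2*Real.pi*Complex.I*(t*((j:ℝ) - (R:ℝ)))) := by
  have key : ∀ j : ℕ, Complex.exp (2*Real.pi*Complex.I*(t*((j:ℝ) - (R:ℝ))))
      = Complex.exp (-(↑(Real.pi*t))*Complex.I) ^ (2*R) * Complex.exp (2*Real.pi*Complex.I*t) ^ j := by
    intro j
    rw [← Complex.exp_nat_mul, ← Complex.exp_nat_mul, ← Complex.exp_add]
    congr 1
    push_cast
    ring
  have hb : Complex.exp (-(↑(Real.pi*t))*Complex.I) * Complex.exp (2*Real.pi*Complex.I*t)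
      = Complex.exp ((↑(Real.pi*t))*Complex.I) := by
    rw [← Complex.exp_add]; congr 1; push_cast; ring
  have h2 : ((4 * Real.cos (Real.pi*t)^2 : ℝ) : ℂ)^R
      = (Complex.exp ((↑(Real.pi*t))*Complex.I) + Complex.exp (-(↑(Real.pi*t))*Complex.I))^(2*R) := by
    rw [pow_mul]
    congr 1
    rw [← Complex.two_cos]
    push_cast
    ring
  rw [h2, ← hb]
  have h4 : (Complex.exp (-(↑(Real.pi*t))*Complex.I) * Complex.exp (2*Real.pi*Complex.I*t)
        + Complex.exp (-(↑(Real.pi*t))*Complex.I))^(2*R)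
      = Complex.exp (-(↑(Real.pi*t))*Complex.I)^(2*R) * (Complex.exp (2*Real.pi*Complex.I*t) + 1)^(2*R) := by
    rw [← mul_pow]
    congr 1
    ring
  rw [h4, add_pow, Finset.mul_sum]
  refine Finset.sum_congr rfl fun j hj => ?_
  rw [key j, one_pow]
  ring

lemma expand_prod (R m : ℕ) (x : Fin m → ℝ) (b : ℝ) (k : ℕ) :
    ((∏ i, (4 * Real.cos (Real.pi * ((k:ℝ) * x i - b))^2)^R : ℝ) : ℂ)
      = ∑ j ∈ Fintype.piFinset (fun _ : Fin m => Finset.range (2*R+1)),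
          (∏ i, ((Nat.choose (2*R) (j i) : ℂ)
              * Complex.exp (2*Real.pi*Complex.I*(-b*((j i:ℝ) - (R:ℝ))))))
            * Complex.exp (2*Real.pi*Complex.I*(∑ i, x i * ((j i:ℝ) - (R:ℝ)))) ^ k := by
  rw [Complex.ofReal_prod]
  have h1 : ∀ i : Fin m, ((4 * Real.cos (Real.pi * ((k:ℝ) * x i - b))^2 : ℝ)^R : ℂ)
      = ∑ j ∈ Finset.range (2*R+1),
          (Nat.choose (2*R) j : ℂ)
            * Complex.exp (2*Real.pi*Complex.I*(((k:ℝ) * x i - b)*((j:ℝ) - (R:ℝ)))) := by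
    intro i
    rw [← Complex.ofReal_pow]
    push_cast
    have := expand_cos R ((k:ℝ) * x i - b); push_cast at this ⊢; exact this
  calc (∏ i, (((4 * Real.cos (Real.pi * ((k:ℝ) * x i - b))^2)^R : ℝ) : ℂ))
      = ∏ i, ∑ j ∈ Finset.range (2*R+1),
          (Nat.choose (2*R) j : ℂ)
            * Complex.exp (2*Real.pi*Complex.I*(((k:ℝ) * x i - b)*((j:ℝ) - (R:ℝ)))) := by
        refine Finset.prod_congr rfl fun i _ => ?_
        rw [← h1 i]; push_cast; ring
    _ = ∑ j ∈ Fintype.piFinset (fun _ : Fin m => Finset.range (2*R+1)),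
          ∏ i, ((Nat.choose (2*R) (j i) : ℂ)
            * Complex.exp (2*Real.pi*Complex.I*(((k:ℝ) * x i - b)*((j i:ℝ) - (R:ℝ))))) := by
        rw [Finset.prod_univ_sum]
    _ = _ := by
        refine Finset.sum_congr rfl fun j hj => ?_
        calc (∏ i, ((Nat.choose (2*R) (j i) : ℂ)
              * Complex.exp (2*Real.pi*Complex.I*(((k:ℝ) * x i - b)*((j i:ℝ) - (R:ℝ))))))
            = ∏ i, (((Nat.choose (2*R) (j i) : ℂ)
                * Complex.exp (2*Real.pi*Complex.I*(-b*((j i:ℝ) - (R:ℝ)))))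
                * Complex.exp (2*Real.pi*Complex.I*(x i*((j i:ℝ) - (R:ℝ))))^k) := by
              refine Finset.prod_congr rfl fun i _ => ?_
              rw [← Complex.exp_nat_mul,
                mul_assoc ((Nat.choose (2*R) (j i) : ℂ)) _ _, ← Complex.exp_add]
              congr 2
              push_cast
              ring
          _ = (∏ i, ((Nat.choose (2*R) (j i) : ℂ)
                * Complex.exp (2*Real.pi*Complex.I*(-b*((j i:ℝ) - (R:ℝ))))))
              * ∏ i, Complex.exp (2*Real.pi*Complex.I*(x i*((j i:ℝ) - (R:ℝ))))^k := by
              rw [Finset.prod_mul_distrib]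
          _ = _ := by
              rw [Finset.prod_pow]
              congr 2
              rw [← Complex.exp_sum]
              congr 1
              push_cast
              rw [Finset.mul_sum]

lemma cos_sq_add_int_mul_pi (y : ℝ) (n : ℤ) : Real.cos (y + n*Real.pi)^2 = Real.cos y^2 := by
  rw [Real.cos_add, Real.sin_int_mul_pi, mul_zero, sub_zero, mul_pow]
  have h0 := Real.sin_sq_add_cos_sq ((n:ℝ)*Real.pi)
  rw [Real.sin_int_mul_pi] at h0
  nlinarith [h0]

lemma fract_cos_bound {c : ℝ} (hc0 : 0 < c) (hc1 : c < 1) {t : ℝ}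
    (ht : Int.fract t ∈ Set.Icc 0 c) :
    Real.cos (Real.pi * (t - (1+c)/2))^2 ≤ Real.sin (Real.pi * c / 2)^2 := by
  have hπ := Real.pi_pos
  set f := Int.fract t with hf
  have htf : t = (⌊t⌋ : ℝ) + f := by rw [hf, Int.floor_add_fract]
  have harg : Real.pi * (t - (1+c)/2) = Real.pi * (f - (1+c)/2) + (⌊t⌋ : ℤ) * Real.pi := by
    conv_lhs => rw [htf]
    ring
  rw [harg, cos_sq_add_int_mul_pi]
  set v := Real.pi * (c/2 - f) with hv
  have harg2 : Real.pi * (f - (1+c)/2) = -(v + Real.pi/2) := by rw [hv]; ring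
  rw [harg2, Real.cos_neg, Real.cos_add_pi_div_two, neg_sq]
  obtain ⟨hf0, hfc⟩ := ht
  have hmem1 : v ∈ Set.Icc (-(Real.pi/2)) (Real.pi/2) := by
    constructor <;> [nlinarith; nlinarith]
  have hmem2 : Real.pi * c / 2 ∈ Set.Icc (-(Real.pi/2)) (Real.pi/2) := by
    constructor <;> nlinarith
  have hmem3 : -(Real.pi * c / 2) ∈ Set.Icc (-(Real.pi/2)) (Real.pi/2) := by
    constructor <;> nlinarith
  have h1 : Real.sin v ≤ Real.sin (Real.pi * c / 2) :=
    Real.strictMonoOn_sin.monotoneOn hmem1 hmem2 (by nlinarith)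
  have h2 : Real.sin (-(Real.pi * c / 2)) ≤ Real.sin v :=
    Real.strictMonoOn_sin.monotoneOn hmem3 hmem1 (by nlinarith)
  rw [Real.sin_neg] at h2
  exact sq_le_sq' h2 h1

set_option maxHeartbeats 1000000 in
/-- Torus-dynamics core of Theorem 1.1(i): if for every positive iterate `k`
some coordinate of `k • Δ/(2N)` has fractional part in `[0, n/N]`, then the
mean indices satisfy a non-trivial resonance relation modulo `2N`. -/
theorem stmt_0 (n N m : ℕ) (hn : 0 < n) (hN : n + 1 ≤ N) (hm : 0 < m)
    (Δ : Fin m → ℝ)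
    (h : ∀ k : ℕ, 0 < k →
      ∃ i : Fin m, Int.fract ((k : ℝ) * Δ i / (2 * N)) ∈ Set.Icc 0 ((n : ℝ) / N)) :
    ∃ a : Fin m → ℤ, a ≠ 0 ∧ ∃ z : ℤ, ∑ i, (a i : ℝ) * Δ i = 2 * N * z := by
  by_contra hcon
  push_neg at hcon
  have hNpos : (0:ℝ) < N := by
    have : 0 < N := lt_of_lt_of_le (Nat.succ_pos n) hN
    exact_mod_cast this
  set x : Fin m → ℝ := fun i => Δ i / (2*N) with hxdef
  set c : ℝ := (n:ℝ) / N with hcdef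
  have hc0 : 0 < c := by positivity
  have hc1 : c < 1 := by
    rw [hcdef, div_lt_one hNpos]
    exact_mod_cast hN
  set b : ℝ := (1+c)/2 with hbdef
  set ρ : ℝ := Real.sin (Real.pi * c / 2)^2 with hρdef
  have hπ := Real.pi_pos
  have hρ0 : 0 ≤ ρ := sq_nonneg _
  have hρ1 : ρ < 1 := by
    have hcos : 0 < Real.cos (Real.pi * c / 2) :=
      Real.cos_pos_of_mem_Ioo ⟨by nlinarith, by nlinarith⟩
    have := Real.sin_sq_add_cos_sq (Real.pi * c / 2)
    nlinarith
  -- no resonance for x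
  have hres : ∀ a : Fin m → ℤ, a ≠ 0 → ∀ zz : ℤ, (∑ i, (a i:ℝ) * x i) ≠ (zz:ℝ) := by
    intro a ha zz hz
    apply hcon a ha zz
    have h2N : (2*(N:ℝ)) ≠ 0 := by positivity
    calc ∑ i, (a i:ℝ) * Δ i = 2*N * ∑ i, (a i:ℝ) * x i := by
          rw [Finset.mul_sum]
          refine Finset.sum_congr rfl fun i _ => ?_
          rw [hxdef]
          field_simp
      _ = 2*N*zz := by rw [hz]
  -- hypothesis in cosine form
  have hyp : ∀ k : ℕ, ∃ i, Real.cos (Real.pi * (((k+1:ℕ):ℝ) * x i - b))^2 ≤ ρ := by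
    intro k
    obtain ⟨i, hi⟩ := h (k+1) (Nat.succ_pos k)
    refine ⟨i, ?_⟩
    have heq : ((k+1:ℕ):ℝ) * Δ i / (2*N) = ((k+1:ℕ):ℝ) * x i := by
      rw [hxdef]; ring
    rw [heq] at hi
    exact fract_cos_bound hc0 hc1 hi
  -- choose R
  obtain ⟨R, hR1, hRkey⟩ : ∃ R : ℕ, 1 ≤ R ∧ (2*(R:ℝ)+1)^m * ρ^R < 1 := by
    have hsum : Summable (fun nn : ℕ => ‖(nn:ℝ)^m * ρ^nn‖) :=
      summable_norm_pow_mul_geometric_of_norm_lt_one m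
        (by rwa [Real.norm_eq_abs, abs_of_nonneg hρ0])
    have hts : Filter.Tendsto (fun nn : ℕ => (nn:ℝ)^m * ρ^nn) Filter.atTop (nhds 0) :=
      (hsum.of_norm).tendsto_atTop_zero
    have hev : ∀ᶠ nn : ℕ in Filter.atTop, (nn:ℝ)^m * ρ^nn < (1/3:ℝ)^m :=
      hts.eventually (gt_mem_nhds (by positivity))
    obtain ⟨R, hRe, hR1⟩ := (hev.and (Filter.eventually_ge_atTop 1)).exists
    refine ⟨R, hR1, ?_⟩
    have hR1' : (1:ℝ) ≤ (R:ℝ) := by exact_mod_cast hR1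
    have h1 : (2*(R:ℝ)+1)^m ≤ (3*(R:ℝ))^m :=
      pow_le_pow_left₀ (by positivity) (by linarith) m
    calc (2*(R:ℝ)+1)^m * ρ^R ≤ (3*(R:ℝ))^m * ρ^R :=
          mul_le_mul_of_nonneg_right h1 (by positivity)
      _ = 3^m * ((R:ℝ)^m * ρ^R) := by rw [mul_pow]; ring
      _ < 3^m * (1/3:ℝ)^m := by
          exact mul_lt_mul_of_pos_left hRe (by positivity)
      _ = 1 := by rw [← mul_pow]; norm_num
  -- notation
  set S := Fintype.piFinset (fun _ : Fin m => Finset.range (2*R+1)) with hSdef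
  set w : (Fin m → ℕ) → ℂ := fun j => ∏ i, ((Nat.choose (2*R) (j i) : ℂ)
      * Complex.exp (2*Real.pi*Complex.I*(-b*((j i:ℝ) - (R:ℝ))))) with hwdef
  set zc : (Fin m → ℕ) → ℂ := fun j =>
      Complex.exp (2*Real.pi*Complex.I*(∑ i, x i * ((j i:ℝ) - (R:ℝ)))) with hzdef
  set F : ℕ → ℝ := fun k => ∏ i, (4 * Real.cos (Real.pi * ((k:ℝ) * x i - b))^2)^R with hFdef
  set j0 : Fin m → ℕ := fun _ => R with hj0def
  have hj0S : j0 ∈ S := by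
    simp [hSdef, hj0def]
    omega
  -- |zc j| = 1
  have habs1 : ∀ j, ‖zc j‖ = 1 := by
    intro j
    rw [hzdef]
    simp [Complex.norm_exp]
  -- zc j ≠ 1 off j0
  have hzne : ∀ j ∈ S.erase j0, zc j ≠ 1 := by
    intro j hj hone
    obtain ⟨hjne, hjS⟩ := Finset.mem_erase.mp hj
    rw [hzdef] at hone
    rw [Complex.exp_eq_one_iff] at hone
    obtain ⟨q, hq⟩ := hone
    have h2πI : (2*(Real.pi:ℂ)*Complex.I) ≠ 0 := by
      simp [Real.pi_ne_zero, Complex.I_ne_zero]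
    have hθq : (∑ i, x i * ((j i:ℝ) - (R:ℝ))) = (q:ℝ) := by
      have h5 : (2*(Real.pi:ℂ)*Complex.I) * ((∑ i, x i * ((j i:ℝ) - (R:ℝ)) : ℝ) : ℂ)
          = (2*(Real.pi:ℂ)*Complex.I) * ((q:ℝ) : ℂ) := by
        rw [hq]; push_cast; ring
      have h6 := mul_left_cancel₀ h2πI h5
      exact_mod_cast h6
    set a : Fin m → ℤ := fun i => (j i : ℤ) - R with hadef
    have hane : a ≠ 0 := by
      intro h0
      apply hjne
      funext i
      have h7 := congrFun h0 i
      simp only [hadef, Pi.zero_apply, sub_eq_zero] at h7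
      exact_mod_cast h7
    apply hres a hane q
    rw [← hθq]
    refine Finset.sum_congr rfl fun i _ => ?_
    simp only [hadef]
    push_cast
    ring
  set B : ℝ := ∑ j ∈ S.erase j0, ‖w j‖ * (2 / ‖zc j - 1‖) with hBdef
  -- main estimate
  have main : ∀ K : ℕ, ((Nat.choose (2*R) R : ℝ))^m * K ≤ (K:ℝ) * (4^m * ρ)^R + B := by
    intro K
    set T : ℝ := ∑ k ∈ Finset.range K, F (k+1) with hTdef
    have hTC : (T:ℂ) = ∑ j ∈ S, w j * ∑ k ∈ Finset.range K, (zc j)^(k+1) := by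
      calc (T:ℂ) = ∑ k ∈ Finset.range K, ((F (k+1) : ℝ) : ℂ) := by
            rw [hTdef]; push_cast; rfl
        _ = ∑ k ∈ Finset.range K, ∑ j ∈ S, w j * (zc j)^(k+1) := by
            refine Finset.sum_congr rfl fun k _ => ?_
            rw [hFdef, hwdef, hzdef, hSdef]
            exact expand_prod R m x b (k+1)
        _ = ∑ j ∈ S, ∑ k ∈ Finset.range K, w j * (zc j)^(k+1) := Finset.sum_comm
        _ = ∑ j ∈ S, w j * ∑ k ∈ Finset.range K, (zc j)^(k+1) := by
            refine Finset.sum_congr rfl fun j _ => (Finset.mul_sum _ _ _).symm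
    have hwj0 : w j0 = (((Nat.choose (2*R) R : ℝ))^m : ℂ) := by
      rw [hwdef, hj0def]
      simp [Finset.prod_const]
    have hzj0 : zc j0 = 1 := by
      rw [hzdef, hj0def]
      simp
    have hsplit : (T:ℂ) = (((Nat.choose (2*R) R : ℝ))^m : ℂ) * K
        + ∑ j ∈ S.erase j0, w j * ∑ k ∈ Finset.range K, (zc j)^(k+1) := by
      rw [hTC, ← Finset.add_sum_erase S _ hj0S, hwj0, hzj0]
      simp
    have hgeom : ∀ j ∈ S.erase j0,
        ‖∑ k ∈ Finset.range K, (zc j)^(k+1)‖ ≤ 2 / ‖zc j - 1‖ := by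
      intro j hj
      have hne := hzne j hj
      have hne' : zc j - 1 ≠ 0 := sub_ne_zero.mpr hne
      have hd : 0 < ‖zc j - 1‖ := norm_pos_iff.mpr hne'
      have hzsum : ∑ k ∈ Finset.range K, (zc j)^(k+1)
          = (zc j ^ K - 1)/(zc j - 1) * zc j := by
        rw [← geom_sum_eq hne K, Finset.sum_mul]
        exact Finset.sum_congr rfl fun k _ => (pow_succ _ _)
      rw [hzsum, norm_mul, norm_div, habs1 j, mul_one]
      have hnum : ‖zc j ^ K - 1‖ ≤ 2 := by
        calc ‖zc j ^ K - 1‖ ≤ ‖zc j ^ K‖ + ‖(1:ℂ)‖ := by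
              exact norm_sub_le _ _
          _ = 2 := by rw [norm_pow, habs1 j, one_pow, norm_one]; norm_num
      gcongr
    have htail : ‖∑ j ∈ S.erase j0, w j * ∑ k ∈ Finset.range K, (zc j)^(k+1)‖ ≤ B := by
      refine le_trans (norm_sum_le _ _) ?_
      rw [hBdef]
      refine Finset.sum_le_sum fun j hj => ?_
      rw [norm_mul]
      exact mul_le_mul_of_nonneg_left (hgeom j hj) (norm_nonneg _)
    have habs : |((Nat.choose (2*R) R : ℝ))^m * K - T| ≤ B := by
      have h5 : ((((Nat.choose (2*R) R : ℝ))^m * K - T : ℝ) : ℂ)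
          = -(∑ j ∈ S.erase j0, w j * ∑ k ∈ Finset.range K, (zc j)^(k+1)) := by
        have h6 := hsplit
        push_cast at h6 ⊢
        linear_combination -h6
      calc |((Nat.choose (2*R) R : ℝ))^m * K - T|
          = ‖((((Nat.choose (2*R) R : ℝ))^m * K - T : ℝ) : ℂ)‖ := by
            rw [Complex.norm_real, Real.norm_eq_abs]
        _ = ‖∑ j ∈ S.erase j0, w j * ∑ k ∈ Finset.range K, (zc j)^(k+1)‖ := by
            rw [h5, norm_neg]
        _ ≤ B := htail
    have hFb : ∀ k ∈ Finset.range K, F (k+1) ≤ (4^m*ρ)^R := by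
      intro k _
      obtain ⟨i0, hi0⟩ := hyp k
      rw [hFdef]
      simp only
      rw [Finset.prod_pow]
      refine pow_le_pow_left₀ ?_ ?_ R
      · exact Finset.prod_nonneg fun i _ => by positivity
      have hsplit2 := Finset.mul_prod_erase Finset.univ
        (fun i => 4 * Real.cos (Real.pi * (((k+1:ℕ):ℝ) * x i - b))^2) (Finset.mem_univ i0)
      rw [← hsplit2]
      have h1 : 4 * Real.cos (Real.pi * (((k+1:ℕ):ℝ) * x i0 - b))^2 ≤ 4 * ρ := by nlinarith
      have h2 : ∏ i ∈ Finset.univ.erase i0, (4 * Real.cos (Real.pi * (((k+1:ℕ):ℝ) * x i - b))^2)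
          ≤ ∏ i ∈ Finset.univ.erase i0, (4:ℝ) := by
        refine Finset.prod_le_prod (fun i _ => by positivity) (fun i _ => ?_)
        nlinarith [Real.neg_one_le_cos (Real.pi * (((k+1:ℕ):ℝ) * x i - b)),
          Real.cos_le_one (Real.pi * (((k+1:ℕ):ℝ) * x i - b))]
      have h3 : ∏ i ∈ Finset.univ.erase i0, (4:ℝ) = 4^(m-1) := by
        rw [Finset.prod_const, Finset.card_erase_of_mem (Finset.mem_univ i0),
          Finset.card_univ, Fintype.card_fin]
      have h4 : (4:ℝ)*ρ * 4^(m-1) = 4^m * ρ := by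
        have h4' : (4:ℝ)^m = 4 * 4^(m-1) := by
          rw [← pow_succ']
          congr 1
          omega
        rw [h4']; ring
      calc (4 * Real.cos (Real.pi * (((k+1:ℕ):ℝ) * x i0 - b))^2)
            * ∏ i ∈ Finset.univ.erase i0, (4 * Real.cos (Real.pi * (((k+1:ℕ):ℝ) * x i - b))^2)
          ≤ (4*ρ) * 4^(m-1) := by
            refine mul_le_mul h1 (h2.trans_eq h3) ?_ (by positivity)
            exact Finset.prod_nonneg fun i _ => by positivity
        _ = 4^m * ρ := h4
    have hTle : T ≤ (K:ℝ) * (4^m*ρ)^R := by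
      rw [hTdef]
      calc ∑ k ∈ Finset.range K, F (k+1) ≤ ∑ k ∈ Finset.range K, (4^m*ρ)^R :=
            Finset.sum_le_sum hFb
        _ = (K:ℝ) * (4^m*ρ)^R := by
            rw [Finset.sum_const, Finset.card_range, nsmul_eq_mul]
    have h8 := (abs_le.mp habs).2
    linarith
  -- choose lower bound and contradiction
  have hchoose : (4:ℝ)^R ≤ (2*(R:ℝ)+1) * (Nat.choose (2*R) R : ℝ) := by
    have := Nat.four_pow_le_two_mul_self_mul_centralBinom R hR1
    rw [Nat.centralBinom] at this
    have h2 : (4:ℝ)^R ≤ ((2*R) : ℕ) * (Nat.choose (2*R) R : ℝ) := by exact_mod_cast this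
    have hc0' : (0:ℝ) ≤ (Nat.choose (2*R) R : ℝ) := by positivity
    push_cast at h2 ⊢
    nlinarith
  have hcpos : (0:ℝ) < (Nat.choose (2*R) R : ℝ)^m := by
    have : 0 < Nat.choose (2*R) R := Nat.choose_pos (by omega)
    positivity
  have hεpos : 0 < ((Nat.choose (2*R) R : ℝ))^m - (4^m * ρ)^R := by
    have h1 : ((4:ℝ)^m * ρ)^R = ((4:ℝ)^R)^m * ρ^R := by
      rw [mul_pow]
      congr 1
      rw [← pow_mul, ← pow_mul, mul_comm m R]
    have h2 : ((4:ℝ)^R)^m ≤ ((2*(R:ℝ)+1) * (Nat.choose (2*R) R : ℝ))^m :=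
      pow_le_pow_left₀ (by positivity) hchoose m
    have h3 : ((2*(R:ℝ)+1) * (Nat.choose (2*R) R : ℝ))^m * ρ^R
        = (Nat.choose (2*R) R : ℝ)^m * ((2*(R:ℝ)+1)^m * ρ^R) := by
      rw [mul_pow]
      ring
    have h4 : ((4:ℝ)^m * ρ)^R ≤ (Nat.choose (2*R) R : ℝ)^m * ((2*(R:ℝ)+1)^m * ρ^R) := by
      rw [h1, ← h3]
      exact mul_le_mul_of_nonneg_right h2 (by positivity)
    nlinarith
  obtain ⟨K, hK⟩ := exists_nat_gt (B / ((Nat.choose (2*R) R : ℝ)^m - (4^m * ρ)^R))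
  have hKb := main K
  have : (K:ℝ) * ((Nat.choose (2*R) R : ℝ)^m - (4^m * ρ)^R) ≤ B := by nlinarith
  rw [div_lt_iff₀ hεpos] at hK
  nlinarith
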